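/- Let ℓ₁ ≠ ℓ₂ be positive reals and suppose B₁ = B₂ = [[b, 0], [0, 1/b]] with b > 0 in the decomposition of the transfer matrices M^E(ℓⱼ, Bⱼ) = Bⱼ·T(E, ℓⱼ). If the (2,1) entry of the commutator [M^E(ℓ₁, B₁), M^E(ℓ₂, B₂)] vanishes for all E = w² with w > 0, then (1 − b²)·w·sin(w(ℓ₁ − ℓ₂)) = 0 for all w > 0, and hence b = 1. -/

import Mathlib

open Real Matrix

noncomputable def freeMonodromy (E ℓ : ℝ) : Matrix (Fin 2) (Fin 2) ℝ :=
  !![Real.cos (Real.sqrt E * ℓ), Real.sin (Real.sqrt E * ℓ) / Real.sqrt E;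
     -(Real.sqrt E * Real.sin (Real.sqrt E * ℓ)), Real.cos (Real.sqrt E * ℓ)]

noncomputable def diagMat (b : ℝ) : Matrix (Fin 2) (Fin 2) ℝ :=
  !![b, 0; 0, 1 / b]

theorem diag_case_forces_b_eq_one (ℓ₁ ℓ₂ b : ℝ) (h₁ : ℓ₁ > 0) (h₂ : ℓ₂ > 0)
    (hne : ℓ₁ ≠ ℓ₂) (hb : b > 0)
    (h : ∀ w : ℝ, w > 0 →
      ((diagMat b * freeMonodromy (w ^ 2) ℓ₁) * (diagMat b * freeMonodromy (w ^ 2) ℓ₂)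
        - (diagMat b * freeMonodromy (w ^ 2) ℓ₂) * (diagMat b * freeMonodromy (w ^ 2) ℓ₁)) 1 0
        = 0) :
    (∀ w : ℝ, w > 0 → (1 - b ^ 2) * w * Real.sin (w * (ℓ₁ - ℓ₂)) = 0) ∧ b = 1 := by
  have hb0 : b ≠ 0 := ne_of_gt hb
  have key : ∀ w : ℝ, w > 0 → (1 - b ^ 2) * w * Real.sin (w * (ℓ₁ - ℓ₂)) = 0 := by
    intro w hw
    have hE := h w hw
    have hs : Real.sqrt (w ^ 2) = w := Real.sqrt_sq hw.le
    simp only [freeMonodromy, diagMat, hs, Matrix.sub_apply, Matrix.mul_apply,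
      Fin.sum_univ_succ, Fin.sum_univ_zero] at hE
    norm_num at hE
    field_simp at hE
    rw [mul_sub, Real.sin_sub]
    apply mul_left_cancel₀ hb0
    rw [mul_zero]
    linear_combination b * hE
  refine ⟨key, ?_⟩
  set d := ℓ₁ - ℓ₂ with hd
  have hd0 : d ≠ 0 := sub_ne_zero.mpr hne
  have hadpos : |d| > 0 := abs_pos.mpr hd0
  set w := Real.pi / (2 * |d|) with hwdef
  have hwpos : w > 0 := by positivity
  have hk := key w hwpos
  have hwd : w * |d| = Real.pi / 2 := by
    field_simp [hwdef]
    rw [hwdef, div_mul_eq_mul_div, div_mul_eq_mul_div, div_eq_iff (mul_ne_zero two_ne_zero hadpos.ne')]; ring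
  have hsin1 : |Real.sin (w * d)| = 1 := by
    rcases abs_cases d with ⟨he, _⟩ | ⟨he, _⟩
    · rw [← he, hwd, Real.sin_pi_div_two, abs_one]
    · have : w * d = -(Real.pi / 2) := by rw [← hwd, he]; ring
      rw [this, Real.sin_neg, Real.sin_pi_div_two, abs_neg, abs_one]
  have hsne : Real.sin (w * d) ≠ 0 := by
    intro hz; rw [hz, abs_zero] at hsin1; norm_num at hsin1
  have hb2 : 1 - b ^ 2 = 0 := by
    rcases mul_eq_zero.mp hk with h' | h'
    · rcases mul_eq_zero.mp h' with h'' | h''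
      · exact h''
      · exact absurd h'' (ne_of_gt hwpos)
    · exact absurd h' hsne
  have hfac : (b - 1) * (b + 1) = 0 := by nlinarith
  rcases mul_eq_zero.mp hfac with h' | h'
  · linarith
  · linarith
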